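/- A circular ab-chain with all worlds having pairwise distinct 'colors' at specified positions (valuations 00, 01, 10, 11 occurring on four distinct arcs, as in Sq ⊙ IS^n) is bisimulation minimal: no two distinct worlds of a circular ab-chain in which antipodal arcs carry different valuations are bisimilar. -/

import Mathlib

namespace Stmt10

/-- The two agents: `false` is agent `a`, `true` is agent `b`. -/
abbrev Agent := Bool

inductive Pat : Type
  | Rab | Rba | U

def recv : Pat → Agent → Set Agent
  | Pat.Rab, false => {false}
  | Pat.Rab, true => Set.univ
  | Pat.Rba, false => Set.univ
  | Pat.Rba, true => {true}
  | Pat.U, _ => Set.univ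

/-- Worlds of `Sq ⊙ IS^n`, a circular `ab`-chain whose cycle is divided into
four arcs carrying the four valuations of `{p_a,p_b}`. -/
def WIter : ℕ → Type
  | 0 => Bool × Bool
  | n + 1 => WIter n × Pat

def simIter : (n : ℕ) → Agent → WIter n → WIter n → Prop
  | 0, c, w, w' => if c then w.2 = w'.2 else w.1 = w'.1
  | n + 1, c, x, y => recv x.2 c = recv y.2 c ∧ ∀ d ∈ recv x.2 c, simIter n d x.1 y.1

/-- The valuation of a world of `Sq ⊙ IS^n` (the valuation of its underlying
`Sq`-world). -/
def valIter : (n : ℕ) → WIter n → Bool × Bool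
  | 0, w => w
  | n + 1, x => valIter n x.1

instance : DecidableEq Pat := fun a b =>
  match a, b with
  | Pat.Rab, Pat.Rab => isTrue rfl
  | Pat.Rba, Pat.Rba => isTrue rfl
  | Pat.U, Pat.U => isTrue rfl
  | Pat.Rab, Pat.Rba => isFalse (fun h => Pat.noConfusion h)
  | Pat.Rab, Pat.U => isFalse (fun h => Pat.noConfusion h)
  | Pat.Rba, Pat.Rab => isFalse (fun h => Pat.noConfusion h)
  | Pat.Rba, Pat.U => isFalse (fun h => Pat.noConfusion h)
  | Pat.U, Pat.Rab => isFalse (fun h => Pat.noConfusion h)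
  | Pat.U, Pat.Rba => isFalse (fun h => Pat.noConfusion h)

instance WIter.decEq : (n : ℕ) → DecidableEq (WIter n)
  | 0 => inferInstanceAs (DecidableEq (Bool × Bool))
  | n + 1 => @instDecidableEqProd _ _ (WIter.decEq n) inferInstance

-- partner map
def sig : (n : ℕ) → Bool → WIter n → WIter n
  | 0, c, w => if c then (!w.1, w.2) else (w.1, !w.2)
  | n + 1, c, x =>
    match c, x.2 with
    | false, Pat.Rab => (sig n false x.1, Pat.Rab)
    | false, Pat.Rba => (x.1, Pat.U)
    | false, Pat.U => (x.1, Pat.Rba)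
    | true, Pat.Rba => (sig n true x.1, Pat.Rba)
    | true, Pat.Rab => (x.1, Pat.U)
    | true, Pat.U => (x.1, Pat.Rab)

lemma sim_refl : ∀ (n : ℕ) (c : Agent) (x : WIter n), simIter n c x x := by
  intro n
  induction n with
  | zero => intro c x; cases c <;> simp [simIter]
  | succ n ih => intro c x; exact ⟨rfl, fun d _ => ih d x.1⟩

lemma both_eq : ∀ (n : ℕ) (x y : WIter n),
    simIter n false x y → simIter n true x y → y = x := by
  intro n
  induction n with
  | zero =>
    intro x y h1 h2
    simp [simIter] at h1 h2
    obtain ⟨a,b⟩ := x; obtain ⟨a',b'⟩ := y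
    simp_all <;> rfl
  | succ n ih =>
    intro x y h1 h2
    obtain ⟨w, p⟩ := x
    obtain ⟨w', p'⟩ := y
    have hset1 : ({false} : Set Agent) ≠ Set.univ := by
      intro h
      have : (true : Agent) ∈ ({false} : Set Agent) := h ▸ Set.mem_univ true
      simp at this
    have hset2 : ({true} : Set Agent) ≠ Set.univ := by
      intro h
      have : (false : Agent) ∈ ({true} : Set Agent) := h ▸ Set.mem_univ false
      simp at this
    have hp : p' = p := by
      cases p <;> cases p' <;> simp_all [recv, simIter] <;>
        first
        | rfl
        | (exact absurd h1.1 hset1)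
        | (exact absurd h1.1.symm hset1)
        | (exact absurd h2.1 hset2)
        | (exact absurd h2.1.symm hset2)
    subst hp
    have hf : simIter n false w w' := by
      cases p'
      · exact h1.2 false (by simp [recv])
      · exact h1.2 false (by simp [recv])
      · exact h1.2 false (by simp [recv])
    have ht : simIter n true w w' := by
      cases p'
      · exact h2.2 true (by simp [recv])
      · exact h1.2 true (by simp [recv])
      · exact h1.2 true (by simp [recv])
    rw [ih w w' hf ht]

lemma sim_sigma : ∀ (n : ℕ) (c : Agent) (x : WIter n), simIter n c x (sig n c x) := by
  intro n
  induction n with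
  | zero => intro c x; cases c <;> simp [simIter, sig]
  | succ n ih =>
    intro c x
    obtain ⟨w, p⟩ := x
    cases c <;> cases p <;>
      refine ⟨rfl, ?_⟩ <;> intro d _ <;> cases d <;>
      simp_all [sig, recv, simIter] <;>
      first
        | exact ih _ w
        | exact sim_refl n _ w







lemma w0_ext (u v : WIter 0) : u = v ↔ (u.1 = v.1 ∧ u.2 = v.2) := Prod.ext_iff

lemma sim_char : ∀ (n : ℕ) (c : Agent) (x y : WIter n),
    simIter n c x y ↔ (y = x ∨ y = sig n c x) := by
  intro n
  induction n with
  | zero =>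
    intro c x y
    obtain ⟨a, b⟩ := x; obtain ⟨a', b'⟩ := y
    cases c <;> cases a <;> cases a' <;> cases b <;> cases b' <;>
      simp [simIter, sig, w0_ext] <;>
      first | exact Or.inl rfl | exact Or.inr rfl | exact ⟨fun h => (by cases h), fun h => (by cases h)⟩
  | succ n ih =>
    intro c x y
    constructor
    · intro h
      obtain ⟨w, p⟩ := x
      obtain ⟨w', p'⟩ := y
      have hset1 : ({false} : Set Agent) ≠ Set.univ := by
        intro h
        have : (true : Agent) ∈ ({false} : Set Agent) := h ▸ Set.mem_univ true
        simp at this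
      have hset2 : ({true} : Set Agent) ≠ Set.univ := by
        intro h
        have : (false : Agent) ∈ ({true} : Set Agent) := h ▸ Set.mem_univ false
        simp at this
      obtain ⟨hr, hs⟩ := h
      cases c
      · cases p
        · -- Rab
          have hp' : p' = Pat.Rab := by
            cases p' <;> simp_all [recv] <;> exact absurd hr.symm hset1
          subst hp'
          have := (ih false w w').mp (hs false (by simp [recv]))
          rcases this with h | h
          · exact Or.inl (by simp [h]; rfl)
          · exact Or.inr (by simp [sig, h]; rfl)
        · -- Rba
          have hww : w' = w :=
            both_eq n w w' (hs false (by simp [recv])) (hs true (by simp [recv]))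
          subst hww
          cases p' <;> simp_all [recv, sig] <;> first | exact Or.inl rfl | exact Or.inr rfl
        · -- U
          have hww : w' = w :=
            both_eq n w w' (hs false (by simp [recv])) (hs true (by simp [recv]))
          subst hww
          cases p' <;> simp_all [recv, sig] <;> first | exact Or.inl rfl | exact Or.inr rfl
      · cases p
        · -- Rab
          have hww : w' = w :=
            both_eq n w w' (hs false (by simp [recv])) (hs true (by simp [recv]))
          subst hww
          cases p' <;> simp_all [recv, sig] <;> first | exact Or.inl rfl | exact Or.inr rfl
        · -- Rba
          have hp' : p' = Pat.Rba := by
            cases p' <;> simp_all [recv] <;> exact absurd hr.symm hset2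
          subst hp'
          have := (ih true w w').mp (hs true (by simp [recv]))
          rcases this with h | h
          · exact Or.inl (by simp [h]; rfl)
          · exact Or.inr (by simp [sig, h]; rfl)
        · -- U
          have hww : w' = w :=
            both_eq n w w' (hs false (by simp [recv])) (hs true (by simp [recv]))
          subst hww
          cases p' <;> simp_all [recv, sig] <;> first | exact Or.inl rfl | exact Or.inr rfl
    · rintro (rfl | rfl)
      · exact sim_refl _ c _
      · exact sim_sigma _ c _

def pos : (n : ℕ) → WIter n → ℕ
  | 0, w =>
    match w with
    | (false, false) => 0
    | (false, true) => 1
    | (true, true) => 2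
    | (true, false) => 3
  | n + 1, x =>
    3 * pos n x.1 +
      (if pos n x.1 % 2 = 0 then
        match x.2 with | Pat.Rba => 0 | Pat.U => 1 | Pat.Rab => 2
      else
        match x.2 with | Pat.Rab => 0 | Pat.U => 1 | Pat.Rba => 2)

lemma pos_lt : ∀ (n : ℕ) (x : WIter n), pos n x < 4 * 3 ^ n := by
  intro n
  induction n with
  | zero =>
    intro x; obtain ⟨a, b⟩ := x
    cases a <;> cases b <;> simp [pos]
  | succ n ih =>
    intro x
    obtain ⟨w, p⟩ := x
    have h := ih w
    have h3 : (4 : ℕ) * 3 ^ (n + 1) = 3 * (4 * 3 ^ n) := by ring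
    rw [h3]
    have : pos (n+1) (w, p) ≤ 3 * pos n w + 2 := by
      cases p <;> simp only [pos] <;> split <;> simp <;> omega
    omega

lemma pos_inj : ∀ (n : ℕ) (x y : WIter n), pos n x = pos n y → x = y := by
  intro n
  induction n with
  | zero =>
    intro x y h
    obtain ⟨a, b⟩ := x; obtain ⟨a', b'⟩ := y
    cases a <;> cases a' <;> cases b <;> cases b' <;> simp_all [pos, w0_ext] <;> rfl
  | succ n ih =>
    intro x y h
    obtain ⟨w, p⟩ := x; obtain ⟨w', p'⟩ := y
    cases p <;> cases p' <;> simp only [pos] at h <;>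
      (have hww : w = w' := by
        apply ih; split at h <;> split at h <;> omega) <;>
      subst hww <;>
      first
      | rfl
      | (exfalso; split at h <;> omega)

def VF : ℕ → Bool × Bool
  | 0 => (false, false)
  | 1 => (false, true)
  | 2 => (true, true)
  | _ => (true, false)

lemma val_pos : ∀ (n : ℕ) (x : WIter n), valIter n x = VF (pos n x / 3 ^ n) := by
  intro n
  induction n with
  | zero =>
    intro x; obtain ⟨a, b⟩ := x
    cases a <;> cases b <;> simp [valIter, pos, VF]
  | succ n ih =>
    intro x
    obtain ⟨w, p⟩ := x
    have hdiv : pos (n+1) (w, p) / 3 ^ (n+1) = pos n w / 3 ^ n := by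
      have h2 : pos (n+1) (w, p) = 3 * pos n w + (pos (n+1) (w,p) - 3 * pos n w) := by
        cases p <;> simp only [pos] <;> split <;> omega
      have hoff : pos (n+1) (w,p) - 3 * pos n w < 3 := by
        cases p <;> simp only [pos] <;> split <;> simp <;> omega
      rw [h2, pow_succ, mul_comm (3^n) 3, ← Nat.div_div_eq_div_mul,
        Nat.mul_add_div (by norm_num), Nat.div_eq_of_lt hoff, Nat.add_zero]
    calc valIter (n+1) (w, p) = valIter n w := rfl
      _ = VF (pos n w / 3 ^ n) := ih w
      _ = VF (pos (n+1) (w, p) / 3 ^ (n+1)) := by rw [hdiv]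


lemma pos_siga : ∀ (n : ℕ) (x : WIter n),
    (pos n x % 2 = 0 ∧ pos n (sig n false x) = pos n x + 1) ∨
    (pos n x % 2 = 1 ∧ pos n (sig n false x) + 1 = pos n x) := by
  intro n
  induction n with
  | zero =>
    intro x; obtain ⟨a, b⟩ := x
    cases a <;> cases b <;> simp [pos, sig]
  | succ n ih =>
    intro x
    obtain ⟨w, p⟩ := x
    have h1 := ih w
    have h2 := pos_lt n w
    cases p <;> simp only [pos, sig] <;> split_ifs <;> simp_all <;> omega

lemma pos_sigb : ∀ (n : ℕ) (x : WIter n),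
    (pos n x = 0 ∧ pos n (sig n true x) = 4 * 3 ^ n - 1) ∨
    (pos n x % 2 = 0 ∧ 0 < pos n x ∧ pos n (sig n true x) + 1 = pos n x) ∨
    (pos n x = 4 * 3 ^ n - 1 ∧ pos n x % 2 = 1 ∧ pos n (sig n true x) = 0) ∨
    (pos n x % 2 = 1 ∧ pos n x + 1 < 4 * 3 ^ n ∧ pos n (sig n true x) = pos n x + 1) := by
  intro n
  induction n with
  | zero =>
    intro x; obtain ⟨a, b⟩ := x
    cases a <;> cases b <;> simp [pos, sig]
  | succ n ih =>
    intro x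
    obtain ⟨w, p⟩ := x
    have h1 := ih w
    have h2 := pos_lt n w
    have hN : 4 * 3 ^ (n+1) = 3 * (4 * 3 ^ n) := by ring
    cases p <;> simp only [pos, sig] <;> split_ifs <;> simp_all <;> omega

def stp (n : ℕ) (x : WIter n) : WIter n :=
  if pos n x % 2 = 0 then sig n false x else sig n true x

def ostp (n : ℕ) (x : WIter n) : WIter n :=
  if pos n x % 2 = 0 then sig n true x else sig n false x

lemma N_even (n : ℕ) : 4 * 3 ^ n = 2 * (2 * 3 ^ n) := by ring

lemma N_pos (n : ℕ) : 0 < 4 * 3 ^ n := by positivity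

lemma stp_pos (n : ℕ) (x : WIter n) :
    (pos n x + 1 < 4 * 3 ^ n ∧ pos n (stp n x) = pos n x + 1) ∨
    (pos n x = 4 * 3 ^ n - 1 ∧ pos n (stp n x) = 0) := by
  have h1 := pos_siga n x
  have h2 := pos_sigb n x
  have h3 := pos_lt n x
  have h4 := N_even n
  unfold stp
  split <;> omega

lemma ostp_pos (n : ℕ) (x : WIter n) :
    (0 < pos n x ∧ pos n (ostp n x) + 1 = pos n x) ∨
    (pos n x = 0 ∧ pos n (ostp n x) = 4 * 3 ^ n - 1) := by
  have h1 := pos_siga n x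
  have h2 := pos_sigb n x
  have h3 := pos_lt n x
  have h4 := N_even n
  unfold ostp
  split <;> omega

lemma stp_par (n : ℕ) (x : WIter n) : pos n (stp n x) % 2 ≠ pos n x % 2 := by
  have h1 := stp_pos n x
  have h4 := N_even n
  have h3 := pos_lt n x
  omega

lemma ostp_par (n : ℕ) (x : WIter n) : pos n (ostp n x) % 2 ≠ pos n x % 2 := by
  have h1 := ostp_pos n x
  have h4 := N_even n
  have h3 := pos_lt n x
  omega

instance instNeZeroN (n : ℕ) : NeZero (4 * 3 ^ n) := ⟨by positivity⟩

def pi (n : ℕ) (x : WIter n) : ZMod (4 * 3 ^ n) := (pos n x : ZMod (4 * 3 ^ n))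

lemma pi_stp (n : ℕ) (x : WIter n) : pi n (stp n x) = pi n x + 1 := by
  rcases stp_pos n x with ⟨h1, h2⟩ | ⟨h1, h2⟩
  · unfold pi; rw [h2]; push_cast; ring
  · unfold pi
    rw [h2, h1]
    have : ((4 * 3 ^ n - 1 : ℕ) : ZMod (4 * 3 ^ n)) + 1
        = ((4 * 3 ^ n - 1 + 1 : ℕ) : ZMod (4 * 3 ^ n)) := by push_cast; ring
    rw [this, Nat.sub_add_cancel (N_pos n), ZMod.natCast_self]
    simp

lemma pi_ostp (n : ℕ) (x : WIter n) : pi n (ostp n x) = pi n x - 1 := by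
  rcases ostp_pos n x with ⟨h1, h2⟩ | ⟨h1, h2⟩
  · unfold pi
    have : pos n x = pos n (ostp n x) + 1 := by omega
    rw [this]; push_cast; ring
  · unfold pi
    rw [h2, h1]
    have : ((4 * 3 ^ n - 1 : ℕ) : ZMod (4 * 3 ^ n)) + 1
        = ((4 * 3 ^ n - 1 + 1 : ℕ) : ZMod (4 * 3 ^ n)) := by push_cast; ring
    have h5 : ((4 * 3 ^ n - 1 : ℕ) : ZMod (4 * 3 ^ n)) + 1 = 0 := by
      rw [this, Nat.sub_add_cancel (N_pos n), ZMod.natCast_self]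
    push_cast
    linear_combination h5

def arc (n : ℕ) (q : ZMod (4 * 3 ^ n)) : ℕ := q.val / 3 ^ n

lemma VF_inj {a b : ℕ} (ha : a < 4) (hb : b < 4) (h : VF a = VF b) : a = b := by
  interval_cases a <;> interval_cases b <;> simp_all [VF]

lemma arc_lt (n : ℕ) (q : ZMod (4 * 3 ^ n)) : arc n q < 4 := by
  have := ZMod.val_lt q
  unfold arc
  have hm : 0 < 3 ^ n := by positivity
  rw [Nat.div_lt_iff_lt_mul hm]
  omega

lemma period (n : ℕ) (d : ZMod (4 * 3 ^ n))
    (h : ∀ q : ZMod (4 * 3 ^ n), arc n q = arc n (q + d)) : d = 0 := by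
  by_contra hd
  have hm : 0 < 3 ^ n := by positivity
  have hNN : (3:ℕ) ^ n < 4 * 3 ^ n := by omega
  have h00 : arc n 0 = 0 := by simp [arc]
  have h0 : arc n d = 0 := by have := h 0; rw [zero_add] at this; omega
  have hdv : d.val < 3 ^ n := by
    unfold arc at h0
    have := (Nat.div_eq_zero_iff.mp h0).resolve_left hm.ne'
    exact this
  have hdv0 : d.val ≠ 0 := by
    intro h'
    exact hd (by rwa [← ZMod.val_eq_zero])
  have hcast : ((d.val : ℕ) : ZMod (4 * 3 ^ n)) = d := by
    simp [ZMod.natCast_val, ZMod.cast_id]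
  have claim : ∀ j : ℕ, arc n ((j * d.val : ℕ) : ZMod (4 * 3 ^ n)) = 0 := by
    intro j
    induction j with
    | zero => simpa using h00
    | succ j ih =>
      have : (((j + 1) * d.val : ℕ) : ZMod (4 * 3 ^ n))
          = ((j * d.val : ℕ) : ZMod (4 * 3 ^ n)) + ((d.val : ℕ) : ZMod (4 * 3 ^ n)) := by
        push_cast; ring
      rw [this, hcast, ← h]
      exact ih
  set j := (3 ^ n - 1) / d.val + 1 with hj
  have hdm := Nat.div_add_mod (3 ^ n - 1) d.val
  have hmod : (3 ^ n - 1) % d.val < d.val := Nat.mod_lt _ (Nat.pos_of_ne_zero hdv0)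
  have hexp : j * d.val = d.val * ((3 ^ n - 1) / d.val) + d.val := by rw [hj]; ring
  have hlow : 3 ^ n - 1 < j * d.val := by omega
  have hhigh : j * d.val < 2 * 3 ^ n := by omega
  have hjN : j * d.val < 4 * 3 ^ n := by omega
  have := claim j
  unfold arc at this
  rw [ZMod.val_cast_of_lt hjN] at this
  have : j * d.val / 3 ^ n = 1 := by
    have := Nat.div_eq_of_lt_le (by omega : 1 * 3 ^ n ≤ j * d.val)
      (by omega : j * d.val < (1 + 1) * 3 ^ n)
    omega
  omega

lemma reflect (n : ℕ) (s : ZMod (4 * 3 ^ n))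
    (h : ∀ q : ZMod (4 * 3 ^ n), arc n q = arc n (s - q)) : False := by
  have hm : 0 < 3 ^ n := by positivity
  have h00 : arc n 0 = 0 := by simp [arc]
  have h0 : arc n s = 0 := by have := h 0; rw [sub_zero] at this; omega
  have hsv : s.val < 3 ^ n := by
    unfold arc at h0
    exact (Nat.div_eq_zero_iff.mp h0).resolve_left hm.ne'
  have hmN : (3:ℕ) ^ n < 4 * 3 ^ n := by omega
  have hscast : ((s.val : ℕ) : ZMod (4 * 3 ^ n)) = s := by
    simp [ZMod.natCast_val, ZMod.cast_id]
  have hsub : s - ((3 ^ n : ℕ) : ZMod (4 * 3 ^ n))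
      = ((s.val + 3 * 3 ^ n : ℕ) : ZMod (4 * 3 ^ n)) := by
    have h4 : ((4 * 3 ^ n : ℕ) : ZMod (4 * 3 ^ n)) = 0 := ZMod.natCast_self _
    rw [sub_eq_iff_eq_add]
    have hcomb : ((s.val + 3 * 3 ^ n : ℕ) : ZMod (4 * 3 ^ n)) + ((3 ^ n : ℕ) : ZMod (4 * 3 ^ n))
        = ((s.val : ℕ) : ZMod (4 * 3 ^ n)) + ((4 * 3 ^ n : ℕ) : ZMod (4 * 3 ^ n)) := by
      push_cast; ring
    rw [hcomb, h4, add_zero, hscast]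
  have hq := h ((3 ^ n : ℕ) : ZMod (4 * 3 ^ n))
  rw [hsub] at hq
  unfold arc at hq
  rw [ZMod.val_cast_of_lt hmN, ZMod.val_cast_of_lt (by omega : s.val + 3 * 3 ^ n < 4 * 3 ^ n)] at hq
  rw [Nat.div_self hm] at hq
  have : (s.val + 3 * 3 ^ n) / 3 ^ n = 3 := by
    have := Nat.div_eq_of_lt_le (by omega : 3 * 3 ^ n ≤ s.val + 3 * 3 ^ n)
      (by omega : s.val + 3 * 3 ^ n < (3 + 1) * 3 ^ n)
    omega
  omega

inductive EG {n : ℕ} (Z : WIter n → WIter n → Prop) : WIter n → WIter n → Prop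
  | base {x y} : Z x y → EG Z x y
  | refl (x) : EG Z x x
  | symm {x y} : EG Z x y → EG Z y x
  | trans {x y z} : EG Z x y → EG Z y z → EG Z x z

section Bisim

variable {n : ℕ} {Z : WIter n → WIter n → Prop}

lemma EG_atoms (hatoms : ∀ x y, Z x y → valIter n x = valIter n y)
    {x y : WIter n} (h : EG Z x y) : valIter n x = valIter n y := by
  induction h with
  | base h => exact hatoms _ _ h
  | refl => rfl
  | symm _ ih => exact ih.symm
  | trans _ _ ih1 ih2 => exact ih1.trans ih2

lemma EG_fb
    (hforth : ∀ B : Set Agent, B.Nonempty → ∀ x x' y, Z x y →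
      (∀ c ∈ B, simIter n c x x') → ∃ y', (∀ c ∈ B, simIter n c y y') ∧ Z x' y')
    (hback : ∀ B : Set Agent, B.Nonempty → ∀ x y y', Z x y →
      (∀ c ∈ B, simIter n c y y') → ∃ x', (∀ c ∈ B, simIter n c x x') ∧ Z x' y')
    {x y : WIter n} (h : EG Z x y) :
    (∀ (c : Agent) (x' : WIter n), simIter n c x x' →
        ∃ y', simIter n c y y' ∧ EG Z x' y') ∧
    (∀ (c : Agent) (y' : WIter n), simIter n c y y' →
        ∃ x', simIter n c x x' ∧ EG Z x' y') := by
  induction h with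
  | base hz =>
    constructor
    · intro c x' hs
      obtain ⟨y', hy, hz'⟩ := hforth {c} ⟨c, rfl⟩ _ x' _ hz
        (fun d hd => by rcases hd with rfl; exact hs)
      exact ⟨y', hy c rfl, EG.base hz'⟩
    · intro c y' hs
      obtain ⟨x', hx, hz'⟩ := hback {c} ⟨c, rfl⟩ _ _ y' hz
        (fun d hd => by rcases hd with rfl; exact hs)
      exact ⟨x', hx c rfl, EG.base hz'⟩
  | refl x =>
    exact ⟨fun c x' hs => ⟨x', hs, EG.refl x'⟩, fun c y' hs => ⟨y', hs, EG.refl y'⟩⟩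
  | symm _ ih =>
    constructor
    · intro c x' hs
      obtain ⟨w, hw, he⟩ := ih.2 c x' hs
      exact ⟨w, hw, he.symm⟩
    · intro c y' hs
      obtain ⟨w, hw, he⟩ := ih.1 c y' hs
      exact ⟨w, hw, he.symm⟩
  | trans _ _ ih1 ih2 =>
    constructor
    · intro c x' hs
      obtain ⟨u, hu, he1⟩ := ih1.1 c x' hs
      obtain ⟨v, hv, he2⟩ := ih2.1 c u hu
      exact ⟨v, hv, he1.trans he2⟩
    · intro c y' hs
      obtain ⟨u, hu, he2⟩ := ih2.2 c y' hs
      obtain ⟨v, hv, he1⟩ := ih1.2 c u hu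
      exact ⟨v, hv, he1.trans he2⟩

lemma EG_coh
    (hforth : ∀ B : Set Agent, B.Nonempty → ∀ x x' y, Z x y →
      (∀ c ∈ B, simIter n c x x') → ∃ y', (∀ c ∈ B, simIter n c y y') ∧ Z x' y')
    (hback : ∀ B : Set Agent, B.Nonempty → ∀ x y y', Z x y →
      (∀ c ∈ B, simIter n c y y') → ∃ x', (∀ c ∈ B, simIter n c x x') ∧ Z x' y')
    {x y : WIter n} (c : Agent) (h : EG Z x y) :
    EG Z (sig n c x) (sig n c y) := by
  obtain ⟨y', hy, h1⟩ := (EG_fb hforth hback h).1 c (sig n c x) (sim_sigma n c x)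
  rcases (sim_char n c y y').mp hy with h' | h'
  · rw [h'] at h1
    obtain ⟨x', hx, h2⟩ := (EG_fb hforth hback h).2 c (sig n c y) (sim_sigma n c y)
    rcases (sim_char n c x x').mp hx with h'' | h''
    · rw [h''] at h2
      exact h1.trans (h.symm.trans h2)
    · rw [h''] at h2
      exact h2
  · rw [h'] at h1
    exact h1

end Bisim

lemma zmod_cast_val (n : ℕ) (a : ZMod (4 * 3 ^ n)) :
    ((a.val : ℕ) : ZMod (4 * 3 ^ n)) = a := by
  simp [ZMod.natCast_val, ZMod.cast_id]

lemma arc_pi (n : ℕ) (u : WIter n) : arc n (pi n u) = pos n u / 3 ^ n := by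
  unfold arc pi
  rw [ZMod.val_cast_of_lt (pos_lt n u)]

lemma pi_iter_stp (n : ℕ) (j : ℕ) (u : WIter n) :
    pi n ((stp n)^[j] u) = pi n u + j := by
  induction j with
  | zero => simp
  | succ j ih =>
    rw [Function.iterate_succ_apply', pi_stp, ih]
    push_cast
    ring

lemma pi_iter_ostp (n : ℕ) (j : ℕ) (u : WIter n) :
    pi n ((ostp n)^[j] u) = pi n u - j := by
  induction j with
  | zero => simp
  | succ j ih =>
    rw [Function.iterate_succ_apply', pi_ostp, ih]
    push_cast
    ring

lemma arc_eq_of_val_eq (n : ℕ) (u v : WIter n) (h : valIter n u = valIter n v) :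
    pos n u / 3 ^ n = pos n v / 3 ^ n := by
  have hm : 0 < 3 ^ n := by positivity
  rw [val_pos, val_pos] at h
  refine VF_inj ?_ ?_ h <;>
    · rw [Nat.div_lt_iff_lt_mul hm]
      have := pos_lt n u
      have := pos_lt n v
      omega

section Main

variable {n : ℕ} {Z : WIter n → WIter n → Prop}

theorem main_thm
    (hatoms : ∀ x y, Z x y → valIter n x = valIter n y)
    (hforth : ∀ B : Set Agent, B.Nonempty → ∀ x x' y, Z x y →
      (∀ c ∈ B, simIter n c x x') → ∃ y', (∀ c ∈ B, simIter n c y y') ∧ Z x' y')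
    (hback : ∀ B : Set Agent, B.Nonempty → ∀ x y y', Z x y →
      (∀ c ∈ B, simIter n c y y') → ∃ x', (∀ c ∈ B, simIter n c x x') ∧ Z x' y') :
    ∀ x y, Z x y → x = y := by
  have stp_coh : ∀ {u v : WIter n}, EG Z u v → pos n u % 2 = pos n v % 2 →
      EG Z (stp n u) (stp n v) := by
    intro u v h hp
    unfold stp
    rw [hp]
    split
    · exact EG_coh hforth hback false h
    · exact EG_coh hforth hback true h
  have stp_ostp_coh : ∀ {u v : WIter n}, EG Z u v → pos n u % 2 ≠ pos n v % 2 →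
      EG Z (stp n u) (ostp n v) := by
    intro u v h hp
    have hu2 := Nat.mod_two_eq_zero_or_one (pos n u)
    have hv2 := Nat.mod_two_eq_zero_or_one (pos n v)
    unfold stp ostp
    by_cases h0 : pos n u % 2 = 0
    · rw [if_pos h0, if_neg (by omega)]
      exact EG_coh hforth hback false h
    · rw [if_neg h0, if_pos (by omega)]
      exact EG_coh hforth hback true h
  intro x y hZ
  have hE : EG Z x y := EG.base hZ
  by_cases hpar : pos n x % 2 = pos n y % 2
  · -- translation case
    have hwalk : ∀ j : ℕ, EG Z ((stp n)^[j] x) ((stp n)^[j] y) ∧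
        pos n ((stp n)^[j] x) % 2 = pos n ((stp n)^[j] y) % 2 := by
      intro j
      induction j with
      | zero => exact ⟨hE, hpar⟩
      | succ j ih =>
        rw [Function.iterate_succ_apply', Function.iterate_succ_apply']
        refine ⟨stp_coh ih.1 ih.2, ?_⟩
        have h1 := stp_par n ((stp n)^[j] x)
        have h2 := stp_par n ((stp n)^[j] y)
        omega
    have harc : ∀ j : ℕ, arc n (pi n x + (j : ZMod (4 * 3 ^ n)))
        = arc n (pi n y + (j : ZMod (4 * 3 ^ n))) := by
      intro j
      have h2 := arc_eq_of_val_eq n _ _ (EG_atoms hatoms (hwalk j).1)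
      have e1 : arc n (pi n x + (j : ZMod (4 * 3 ^ n)))
          = pos n ((stp n)^[j] x) / 3 ^ n := by rw [← pi_iter_stp, arc_pi]
      have e2 : arc n (pi n y + (j : ZMod (4 * 3 ^ n)))
          = pos n ((stp n)^[j] y) / 3 ^ n := by rw [← pi_iter_stp, arc_pi]
      rw [e1, e2, h2]
    have hper : pi n y - pi n x = 0 := by
      apply period n
      intro q
      calc arc n q
          = arc n (pi n x + (((q - pi n x).val : ℕ) : ZMod (4 * 3 ^ n))) := by
            rw [zmod_cast_val]; exact congrArg (arc n) (by ring)
        _ = arc n (pi n y + (((q - pi n x).val : ℕ) : ZMod (4 * 3 ^ n))) := harc _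
        _ = arc n (q + (pi n y - pi n x)) := by
            rw [zmod_cast_val]; exact congrArg (arc n) (by ring)
    have hpi : pi n x = pi n y := (sub_eq_zero.mp hper).symm
    have hpos : pos n x = pos n y := by
      have h := congrArg ZMod.val hpi
      rwa [pi, pi, ZMod.val_cast_of_lt (pos_lt n x), ZMod.val_cast_of_lt (pos_lt n y)] at h
    exact pos_inj n x y hpos
  · -- reflection case: impossible
    exfalso
    have hwalk : ∀ j : ℕ, EG Z ((stp n)^[j] x) ((ostp n)^[j] y) ∧
        pos n ((stp n)^[j] x) % 2 ≠ pos n ((ostp n)^[j] y) % 2 := by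
      intro j
      induction j with
      | zero => exact ⟨hE, hpar⟩
      | succ j ih =>
        rw [Function.iterate_succ_apply', Function.iterate_succ_apply']
        refine ⟨stp_ostp_coh ih.1 ih.2, ?_⟩
        have h1 := stp_par n ((stp n)^[j] x)
        have h2 := ostp_par n ((ostp n)^[j] y)
        omega
    have harc : ∀ j : ℕ, arc n (pi n x + (j : ZMod (4 * 3 ^ n)))
        = arc n (pi n y - (j : ZMod (4 * 3 ^ n))) := by
      intro j
      have h2 := arc_eq_of_val_eq n _ _ (EG_atoms hatoms (hwalk j).1)
      have e1 : arc n (pi n x + (j : ZMod (4 * 3 ^ n)))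
          = pos n ((stp n)^[j] x) / 3 ^ n := by rw [← pi_iter_stp, arc_pi]
      have e2 : arc n (pi n y - (j : ZMod (4 * 3 ^ n)))
          = pos n ((ostp n)^[j] y) / 3 ^ n := by rw [← pi_iter_ostp, arc_pi]
      rw [e1, e2, h2]
    apply reflect n (pi n x + pi n y)
    intro q
    calc arc n q
        = arc n (pi n x + (((q - pi n x).val : ℕ) : ZMod (4 * 3 ^ n))) := by
          rw [zmod_cast_val]; exact congrArg (arc n) (by ring)
      _ = arc n (pi n y - (((q - pi n x).val : ℕ) : ZMod (4 * 3 ^ n))) := harc _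
      _ = arc n (pi n x + pi n y - q) := by
          rw [zmod_cast_val]; exact congrArg (arc n) (by ring)

end Main

/-- The circular `ab`-chain `Sq ⊙ IS^n`, with its four valuation arcs, is
bisimulation minimal: any collective bisimulation of the model with itself
(atoms, forth and back for all nonempty groups) only relates a world to
itself; i.e. no two distinct worlds are bisimilar. -/
theorem sq_iter_bisimulation_minimal (n : ℕ) (Z : WIter n → WIter n → Prop)
    (hatoms : ∀ x y, Z x y → valIter n x = valIter n y)
    (hforth : ∀ B : Set Agent, B.Nonempty → ∀ x x' y, Z x y →
      (∀ c ∈ B, simIter n c x x') → ∃ y', (∀ c ∈ B, simIter n c y y') ∧ Z x' y')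
    (hback : ∀ B : Set Agent, B.Nonempty → ∀ x y y', Z x y →
      (∀ c ∈ B, simIter n c y y') → ∃ x', (∀ c ∈ B, simIter n c x x') ∧ Z x' y') :
    ∀ x y, Z x y → x = y :=
  main_thm hatoms hforth hback

end Stmt10
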